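/- Let Ĥ_misfit ∈ ℝ^{n×n} be symmetric positive semidefinite with eigendecomposition Ĥ_misfit = V Λ Vᵀ (V orthogonal, Λ = diag(λ₁ ≥ … ≥ λ_n ≥ 0)). Let V_r consist of the first r columns of V and D_r = diag(λ_i/(1+λ_i)) for i ≤ r. Then ‖(Ĥ_misfit + I)⁻¹ − (I − V_r D_r V_rᵀ)‖₂ = λ_{r+1}/(1+λ_{r+1}) ≤ λ_{r+1}. -/

import Mathlib

open Matrix

/-- Norm of a diagonal operator on Euclidean space. -/
lemma aux_diag_norm {n : ℕ} (μ : Fin n → ℝ) (b : ℝ) (hb : 0 ≤ b)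
    (hle : ∀ i, |μ i| ≤ b) (i0 : Fin n) (heq : |μ i0| = b) :
    ‖Matrix.toEuclideanCLM (𝕜 := ℝ) (n := Fin n) (Matrix.diagonal μ)‖ = b := by
  set T := Matrix.toEuclideanCLM (𝕜 := ℝ) (n := Fin n) (Matrix.diagonal μ) with hT
  have hact : ∀ (x : EuclideanSpace ℝ (Fin n)) (i : Fin n), T x i = μ i * x i := by
    intro x i
    have h := congrFun (Matrix.ofLp_toEuclideanCLM (Matrix.diagonal μ) x) i
    rw [Matrix.mulVec_diagonal] at h
    exact h
  apply le_antisymm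
  · refine ContinuousLinearMap.opNorm_le_bound _ hb ?_
    intro x
    rw [EuclideanSpace.norm_eq, EuclideanSpace.norm_eq, ← Real.sqrt_sq hb,
      ← Real.sqrt_mul (by positivity)]
    apply Real.sqrt_le_sqrt
    rw [Finset.mul_sum]
    apply Finset.sum_le_sum
    intro i _
    have h1 : ‖T x i‖ ^ 2 = (μ i) ^ 2 * ‖x i‖ ^ 2 := by
      rw [hact, norm_mul, mul_pow, Real.norm_eq_abs, sq_abs]
    rw [h1]
    have h2 : (μ i) ^ 2 ≤ b ^ 2 := by
      rw [← sq_abs]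
      exact pow_le_pow_left₀ (abs_nonneg _) (hle i) 2
    exact mul_le_mul_of_nonneg_right h2 (by positivity)
  · have hx : T (EuclideanSpace.single i0 1) = EuclideanSpace.single i0 (μ i0) := by
      ext i
      rw [hact]
      by_cases h : i = i0 <;> simp [EuclideanSpace.single_apply, h]
    calc b = ‖T (EuclideanSpace.single i0 1)‖ := by
            rw [hx, EuclideanSpace.norm_single, Real.norm_eq_abs, heq]
      _ ≤ ‖T‖ * ‖EuclideanSpace.single i0 (1 : ℝ)‖ := T.le_opNorm _
      _ = ‖T‖ := by rw [EuclideanSpace.norm_single, Real.norm_eq_abs, abs_one, mul_one]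

/-- Unitary invariance of the operator norm. -/
lemma aux_conj_norm {n : ℕ} (hn : 0 < n) (V A : Matrix (Fin n) (Fin n) ℝ)
    (hV : Vᵀ * V = 1) :
    ‖Matrix.toEuclideanCLM (𝕜 := ℝ) (n := Fin n) (V * A * Vᵀ)‖ =
      ‖Matrix.toEuclideanCLM (𝕜 := ℝ) (n := Fin n) A‖ := by
  haveI : Nonempty (Fin n) := Fin.pos_iff_nonempty.mp hn
  haveI : Nontrivial (EuclideanSpace ℝ (Fin n)) := inferInstance
  have hV2 : V * Vᵀ = 1 := mul_eq_one_comm.mp hV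
  set e := Matrix.toEuclideanCLM (𝕜 := ℝ) (n := Fin n) with he
  have h1 : e Vᵀ * e V = 1 := by rw [← _root_.map_mul, hV, _root_.map_one]
  have h2 : e V * e Vᵀ = 1 := by rw [← _root_.map_mul, hV2, _root_.map_one]
  have hsV : star V = Vᵀ := by ext i j; simp [Matrix.star_apply]
  have hsVt : star Vᵀ = V := by ext i j; simp [Matrix.star_apply]
  have hstar : star (e V) = e Vᵀ := by rw [← map_star, hsV]
  have hstar' : star (e Vᵀ) = e V := by rw [← map_star, hsVt]
  have hone : ‖(1 : EuclideanSpace ℝ (Fin n) →L[ℝ] EuclideanSpace ℝ (Fin n))‖ = 1 := by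
    rw [show (1 : EuclideanSpace ℝ (Fin n) →L[ℝ] EuclideanSpace ℝ (Fin n)) =
      ContinuousLinearMap.id ℝ (EuclideanSpace ℝ (Fin n)) from rfl]
    exact ContinuousLinearMap.norm_id
  have hnV : ‖e V‖ = 1 := by
    have h := CStarRing.norm_star_mul_self (x := e V)
    rw [hstar, h1, hone] at h
    nlinarith [norm_nonneg (e V)]
  have hnVt : ‖e Vᵀ‖ = 1 := by
    have h := CStarRing.norm_star_mul_self (x := e Vᵀ)
    rw [hstar', h2, hone] at h
    nlinarith [norm_nonneg (e Vᵀ)]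
  apply le_antisymm
  · calc ‖e (V * A * Vᵀ)‖ = ‖e V * e A * e Vᵀ‖ := by
          rw [_root_.map_mul, _root_.map_mul]
      _ ≤ ‖e V‖ * ‖e A‖ * ‖e Vᵀ‖ :=
          (norm_mul_le _ _).trans
            (mul_le_mul_of_nonneg_right (norm_mul_le _ _) (norm_nonneg _))
      _ = ‖e A‖ := by rw [hnV, hnVt]; ring
  · have hrec : e A = e Vᵀ * e (V * A * Vᵀ) * e V := by
      rw [_root_.map_mul, _root_.map_mul]
      calc e A = (e Vᵀ * e V) * e A * (e Vᵀ * e V) := by rw [h1, one_mul, mul_one]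
        _ = e Vᵀ * (e V * e A * e Vᵀ) * e V := by noncomm_ring
    calc ‖e A‖ = ‖e Vᵀ * e (V * A * Vᵀ) * e V‖ := by rw [← hrec]
      _ ≤ ‖e Vᵀ‖ * ‖e (V * A * Vᵀ)‖ * ‖e V‖ :=
          (norm_mul_le _ _).trans
            (mul_le_mul_of_nonneg_right (norm_mul_le _ _) (norm_nonneg _))
      _ = ‖e (V * A * Vᵀ)‖ := by rw [hnV, hnVt]; ring

/-- Spectral-norm error of the rank-`r` approximation of the inverse
preconditioned Hessian: if `Ĥ_misfit = V Λ Vᵀ` with `V` orthogonal and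
decreasing nonnegative eigenvalues `λ₁ ≥ … ≥ λ_n ≥ 0`, then
`‖(Ĥ_misfit + I)⁻¹ − (I − V_r D_r V_rᵀ)‖₂ = λ_{r+1}/(1+λ_{r+1}) ≤ λ_{r+1}`. -/
theorem low_rank_inverse_error {n : ℕ}
    (V : Matrix (Fin n) (Fin n) ℝ) (hV : Vᵀ * V = 1)
    (lam : Fin n → ℝ) (hdec : Antitone lam) (hpos : ∀ i, 0 ≤ lam i)
    (Hm : Matrix (Fin n) (Fin n) ℝ) (hHm : Hm = V * diagonal lam * Vᵀ)
    (r : ℕ) (hr : r < n)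
    (Vr : Matrix (Fin n) (Fin r) ℝ)
    (hVr : Vr = Matrix.of fun i (j : Fin r) => V i (Fin.castLE hr.le j))
    (Dr : Matrix (Fin r) (Fin r) ℝ)
    (hDr : Dr = diagonal fun j : Fin r =>
      lam (Fin.castLE hr.le j) / (1 + lam (Fin.castLE hr.le j))) :
    ‖Matrix.toEuclideanCLM (𝕜 := ℝ) (n := Fin n) ((Hm + 1)⁻¹ - (1 - Vr * Dr * Vrᵀ))‖ =
        lam ⟨r, hr⟩ / (1 + lam ⟨r, hr⟩) ∧
      lam ⟨r, hr⟩ / (1 + lam ⟨r, hr⟩) ≤ lam ⟨r, hr⟩ := by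
  have hpos1 : ∀ i, (0 : ℝ) < 1 + lam i := fun i => by have := hpos i; linarith
  set L := lam ⟨r, hr⟩ with hL
  have hL0 : 0 ≤ L := hpos _
  have hL1 : (0 : ℝ) < 1 + L := hpos1 _
  have hb : 0 ≤ L / (1 + L) := by positivity
  have hVVt : V * Vᵀ = 1 := mul_eq_one_comm.mp hV
  have hmulVDV : ∀ D E : Matrix (Fin n) (Fin n) ℝ,
      (V * D * Vᵀ) * (V * E * Vᵀ) = V * (D * E) * Vᵀ := by
    intro D E
    calc (V * D * Vᵀ) * (V * E * Vᵀ) = V * D * (Vᵀ * V) * E * Vᵀ := by noncomm_ring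
      _ = V * (D * E) * Vᵀ := by rw [hV]; noncomm_ring
  -- the inverse
  have hinv : (Hm + 1)⁻¹ = V * diagonal (fun i => (1 + lam i)⁻¹) * Vᵀ := by
    have h1 : Hm + 1 = V * diagonal (fun i => lam i + 1) * Vᵀ := by
      rw [hHm]
      calc V * diagonal lam * Vᵀ + 1 = V * diagonal lam * Vᵀ + V * 1 * Vᵀ := by
            rw [mul_one, hVVt]
        _ = V * (diagonal lam + 1) * Vᵀ := by noncomm_ring
        _ = V * diagonal (fun i => lam i + 1) * Vᵀ := by
            rw [← Matrix.diagonal_one, Matrix.diagonal_add]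
    apply Matrix.inv_eq_right_inv
    rw [h1, hmulVDV, Matrix.diagonal_mul_diagonal]
    have hd : (fun i => (lam i + 1) * (1 + lam i)⁻¹) = fun _ : Fin n => (1 : ℝ) := by
      funext i
      have := hpos1 i
      field_simp
      ring
    rw [hd, Matrix.diagonal_one, mul_one, hVVt]
  -- the truncation
  set d' : Fin n → ℝ := fun i => if (i : ℕ) < r then lam i / (1 + lam i) else 0 with hd'
  have htrunc : Vr * Dr * Vrᵀ = V * diagonal d' * Vᵀ := by
    ext i j
    have lhs : (Vr * Dr * Vrᵀ) i j =
        ∑ k : Fin r, V i (Fin.castLE hr.le k) *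
          (lam (Fin.castLE hr.le k) / (1 + lam (Fin.castLE hr.le k))) *
          V j (Fin.castLE hr.le k) := by
      rw [Matrix.mul_apply]
      refine Finset.sum_congr rfl fun k _ => ?_
      rw [Matrix.transpose_apply, hDr, Matrix.mul_diagonal, hVr]
      rfl
    have rhs : (V * diagonal d' * Vᵀ) i j = ∑ k : Fin n, V i k * d' k * V j k := by
      rw [Matrix.mul_apply]
      refine Finset.sum_congr rfl fun k _ => ?_
      rw [Matrix.transpose_apply, Matrix.mul_diagonal]
    rw [lhs, rhs]
    set s : Finset (Fin n) := (Finset.univ : Finset (Fin r)).map (Fin.castLEEmb hr.le) with hs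
    have hmem : ∀ k : Fin n, k ∈ s ↔ (k : ℕ) < r := by
      intro k
      constructor
      · rintro hk
        obtain ⟨a, -, ha⟩ := Finset.mem_map.mp hk
        rw [← ha]
        exact a.isLt
      · intro hk
        exact Finset.mem_map.mpr ⟨⟨(k : ℕ), hk⟩, Finset.mem_univ _, Fin.ext rfl⟩
    have h0 : ∀ k ∈ Finset.univ, k ∉ s → V i k * d' k * V j k = 0 := by
      intro k _ hk
      have : ¬ ((k : ℕ) < r) := fun h => hk ((hmem k).mpr h)
      simp [hd', this]
    rw [← Finset.sum_subset (Finset.subset_univ s) h0, hs, Finset.sum_map]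
    apply Finset.sum_congr rfl
    intro a _
    have ha : ((Fin.castLEEmb hr.le a : Fin n) : ℕ) < r := a.isLt
    simp only [Fin.castLEEmb_apply]
    rw [hd']
    simp [ha]
  -- the diagonal form of the error
  set μ : Fin n → ℝ := fun i => (1 + lam i)⁻¹ - 1 + d' i with hμ
  have hkey : (Hm + 1)⁻¹ - (1 - Vr * Dr * Vrᵀ) = V * diagonal μ * Vᵀ := by
    rw [hinv, htrunc]
    calc V * diagonal (fun i => (1 + lam i)⁻¹) * Vᵀ - (1 - V * diagonal d' * Vᵀ)
        = V * diagonal (fun i => (1 + lam i)⁻¹) * Vᵀ - V * 1 * Vᵀ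
            + V * diagonal d' * Vᵀ := by rw [mul_one, hVVt]; abel
      _ = V * (diagonal (fun i => (1 + lam i)⁻¹) - 1 + diagonal d') * Vᵀ := by noncomm_ring
      _ = V * diagonal μ * Vᵀ := by
          rw [← Matrix.diagonal_one, Matrix.diagonal_sub, Matrix.diagonal_add]
  constructor
  · rw [hkey, aux_conj_norm (Nat.lt_of_le_of_lt (Nat.zero_le r) hr) V _ hV]
    apply aux_diag_norm μ (L / (1 + L)) hb _ ⟨r, hr⟩
    · have hnot : ¬ ((r : ℕ) < r) := lt_irrefl r
      have hval : μ ⟨r, hr⟩ = -(L / (1 + L)) := by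
        simp only [hμ, hd', hnot, if_false, add_zero, ← hL]
        field_simp
        ring
      rw [hval, abs_neg, abs_of_nonneg hb]
    · intro i
      by_cases h : (i : ℕ) < r
      · have hzero : μ i = 0 := by
          simp only [hμ, hd', h, if_true]
          have := hpos1 i
          field_simp
          ring
        rw [hzero, abs_zero]
        exact hb
      · have hord : (⟨r, hr⟩ : Fin n) ≤ i := by
          rw [Fin.le_def]
          exact Nat.le_of_not_lt h
        have hlam : lam i ≤ L := hdec hord
        have hval : μ i = -(lam i / (1 + lam i)) := by
          simp only [hμ, hd', h, if_false, add_zero]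
          have := hpos1 i
          field_simp
          ring
        rw [hval, abs_neg, abs_of_nonneg (div_nonneg (hpos i) (hpos1 i).le)]
        rw [div_le_div_iff₀ (hpos1 i) hL1]
        nlinarith
  · exact div_le_self hL0 (by linarith)
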